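/- arXiv:1004.3833 — 4 statements merged into one kernel-verified Lean document; each statement's English description precedes it below -/
import Mathlib

section
/- Vertex Grouping preserves the exterior function: Let G be an NFG, let u and v be two distinct vertices of G, and let S denote the set of internal edges joining u and v. Form the NFG G' by merging u and v into a single new vertex w whose incident edges are the edges incident to u or v other than those in S, and whose local function is the sum-of-products ⟨f_u, f_v⟩, i.e., f_w(x_{E(u)∪E(v)∖S}) := ∑_{x_S ∈ ∏_{e∈S} X_e} f_u(x_{E(u)}) · f_v(x_{E(v)}). Then G' is an NFG and Z_{G'} = Z_G. -/
open scoped BigOperators Classical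

/-! # Normal factor graphs -/

/-- `Inc ends extEnd v e` means edge `e` is incident to vertex `v`. -/
def Inc {V Ei Ee : Type} (ends : Ei → V × V) (extEnd : Ee → V) (v : V) :
    Ei ⊕ Ee → Prop
  | .inl i => (ends i).1 = v ∨ (ends i).2 = v
  | .inr j => extEnd j = v

/-- Combine an internal and an external configuration into a configuration on all edges. -/
def combine {Ei Ee : Type} {X : Ei ⊕ Ee → Type}
    (xi : ∀ i : Ei, X (.inl i)) (xe : ∀ j : Ee, X (.inr j)) : ∀ e, X e
  | .inl i => xi i
  | .inr j => xe j

/-- The exterior function realized by a normal factor graph. -/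
noncomputable def Zfun {V Ei Ee : Type} [Fintype V] [Fintype Ei]
    (X : Ei ⊕ Ee → Type) [∀ e, Fintype (X e)]
    (ends : Ei → V × V) (extEnd : Ee → V)
    (f : ∀ v : V, ((e : {e : Ei ⊕ Ee // Inc ends extEnd v e}) → X e.1) → ℂ)
    (xe : ∀ j : Ee, X (.inr j)) : ℂ :=
  ∑ xi : ∀ i : Ei, X (.inl i), ∏ v : V, f v fun e => combine xi xe e.1

/-! ## Grouping two vertices `u` and `v`

The set `S` of internal edges joining `u` and `v` (predicate `Joins`) is deleted; the two
vertices are merged into a single vertex `w` (represented by `⟨v, _⟩` in the vertex type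
`{a : V // a ≠ u}`), whose local function is the sum-of-products `⟨f u, f v⟩`. -/

section Grouping

variable {V Ei Ee : Type} (X : Ei ⊕ Ee → Type)
  (ends : Ei → V × V) (extEnd : Ee → V) (u v : V)

/-- `Joins ends u v i` : the internal edge `i` joins `u` and `v`. -/
def Joins (i : Ei) : Prop := ends i = (u, v) ∨ ends i = (v, u)

/-- The vertex map realizing the merge: `u` is sent to the merged vertex `⟨v, _⟩`,
all other vertices to themselves. -/
noncomputable def mergeV (huv : u ≠ v) (a : V) : {a : V // a ≠ u} :=
  if h : a = u then ⟨v, Ne.symm huv⟩ else ⟨a, h⟩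

lemma mergeV_fst (huv : u ≠ v) {b : V} (hb : b = u ∨ b = v) :
    (mergeV u v huv b).1 = v := by
  rcases hb with hb | hb <;> subst hb
  · rw [mergeV, dif_pos rfl]
  · rw [mergeV, dif_neg (Ne.symm huv)]

lemma mergeV_of_ne (huv : u ≠ v) {a : V} (ha : a ≠ u) :
    mergeV u v huv a = ⟨a, ha⟩ := dif_neg ha

/-- Vertex type of the merged graph. -/
@[reducible] def Vgrp : Type := {a : V // a ≠ u}

/-- Internal edge type of the merged graph: the edges joining `u` and `v` are deleted. -/
@[reducible] def EiGrp : Type := {i : Ei // ¬ Joins ends u v i}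

/-- Edge alphabets of the merged graph. -/
def Xgrp : EiGrp ends u v ⊕ Ee → Type
  | .inl i => X (.inl i.1)
  | .inr j => X (.inr j)

instance XgrpFintype [∀ e, Fintype (X e)] : ∀ e, Fintype (Xgrp X ends u v e)
  | .inl i => inferInstanceAs (Fintype (X (.inl i.1)))
  | .inr j => inferInstanceAs (Fintype (X (.inr j)))

/-- Endpoints of the internal edges of the merged graph. -/
noncomputable def endsGrp (huv : u ≠ v) (i : EiGrp ends u v) : Vgrp u × Vgrp u :=
  (mergeV u v huv (ends i.1).1, mergeV u v huv (ends i.1).2)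

/-- Attachment of the external edges of the merged graph. -/
noncomputable def extEndGrp (huv : u ≠ v) (j : Ee) : Vgrp u :=
  mergeV u v huv (extEnd j)

/-- Assemble, from a configuration `xs` on the deleted edges `S` and a configuration `x`
on the new edges incident to the merged vertex, a configuration on the original edges
incident to `b` (where `b` is `u` or `v`). -/
noncomputable def assembleGrp (huv : u ≠ v) (a : Vgrp u) (ha : a.1 = v)
    (b : V) (hb : b = u ∨ b = v)
    (xs : ∀ s : {i : Ei // Joins ends u v i}, X (.inl s.1))
    (x : (e' : {e' : EiGrp ends u v ⊕ Ee //
        Inc (endsGrp ends u v huv) (extEndGrp extEnd u v huv) a e'}) → Xgrp X ends u v e'.1) :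
    (e : {e : Ei ⊕ Ee // Inc ends extEnd b e}) → X e.1 :=
  fun e =>
    match e with
    | ⟨.inl i, h⟩ =>
        if hJ : Joins ends u v i then xs ⟨i, hJ⟩
        else
          x ⟨.inl ⟨i, hJ⟩, by
            rcases h with h | h
            · exact Or.inl (Subtype.ext (by
                rw [ha]; exact (by rw [h] : (mergeV u v huv (ends i).1).1
                  = (mergeV u v huv b).1).trans (mergeV_fst u v huv hb)))
            · exact Or.inr (Subtype.ext (by
                rw [ha]; exact (by rw [h] : (mergeV u v huv (ends i).2).1
                  = (mergeV u v huv b).1).trans (mergeV_fst u v huv hb)))⟩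
    | ⟨.inr j, h⟩ =>
        x ⟨.inr j, Subtype.ext (by
          show (mergeV u v huv (extEnd j)).1 = a.1
          rw [ha]
          exact (by rw [h] : (mergeV u v huv (extEnd j)).1
            = (mergeV u v huv b).1).trans (mergeV_fst u v huv hb))⟩

/-- Restriction of a configuration on the new edges incident to a vertex `a ∉ {u, v}`
to a configuration on the original edges incident to `a`. -/
noncomputable def restrictGrp (huv : u ≠ v) (a : Vgrp u) (ha : a.1 ≠ v)
    (x : (e' : {e' : EiGrp ends u v ⊕ Ee //
        Inc (endsGrp ends u v huv) (extEndGrp extEnd u v huv) a e'}) → Xgrp X ends u v e'.1) :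
    (e : {e : Ei ⊕ Ee // Inc ends extEnd a.1 e}) → X e.1 :=
  fun e =>
    match e with
    | ⟨.inl i, h⟩ =>
        have hJ : ¬ Joins ends u v i := by
          have h' : (ends i).1 = a.1 ∨ (ends i).2 = a.1 := h
          rintro (hJ | hJ) <;> rw [hJ] at h' <;> rcases h' with h' | h'
          · exact a.2 h'.symm
          · exact ha h'.symm
          · exact ha h'.symm
          · exact a.2 h'.symm
        x ⟨.inl ⟨i, hJ⟩, by
          rcases h with h | h
          · exact Or.inl (by rw [endsGrp]; dsimp only; rw [h, mergeV_of_ne u v huv a.2])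
          · exact Or.inr (by rw [endsGrp]; dsimp only; rw [h, mergeV_of_ne u v huv a.2])⟩
    | ⟨.inr j, h⟩ =>
        x ⟨.inr j, by
          show mergeV u v huv (extEnd j) = a
          rw [h, mergeV_of_ne u v huv a.2]⟩

/-- Local functions of the merged graph: the merged vertex `⟨v, _⟩` carries the
sum-of-products `⟨f u, f v⟩` (summing over the configurations of the deleted edges `S`),
and all other vertices keep their local functions. -/
noncomputable def fGrp (huv : u ≠ v)
    [Fintype Ei] [∀ e, Fintype (X e)]
    (f : ∀ w : V, ((e : {e : Ei ⊕ Ee // Inc ends extEnd w e}) → X e.1) → ℂ)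
    (a : Vgrp u)
    (x : (e' : {e' : EiGrp ends u v ⊕ Ee //
        Inc (endsGrp ends u v huv) (extEndGrp extEnd u v huv) a e'}) → Xgrp X ends u v e'.1) :
    ℂ :=
  if ha : a.1 = v then
    ∑ xs : ∀ s : {i : Ei // Joins ends u v i}, X (.inl s.1),
      f u (assembleGrp X ends extEnd u v huv a ha u (Or.inl rfl) xs x)
        * f v (assembleGrp X ends extEnd u v huv a ha v (Or.inr rfl) xs x)
  else
    f a.1 (restrictGrp X ends extEnd u v huv a ha x)

end Grouping

section Aux

variable {V Ei Ee : Type} (X : Ei ⊕ Ee → Type)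
  (ends : Ei → V × V) (extEnd : Ee → V) (u v : V) (huv : u ≠ v)

/-- The full internal configuration assembled from pieces on `S` and its complement. -/
noncomputable def xiFull
    (xs : ∀ s : {i : Ei // Joins ends u v i}, X (.inl s.1))
    (xi' : ∀ i : EiGrp ends u v, Xgrp X ends u v (.inl i)) :
    ∀ i : Ei, X (.inl i) :=
  fun i => if h : Joins ends u v i then xs ⟨i, h⟩ else xi' ⟨i, h⟩

lemma assembleGrp_combine (a : Vgrp u) (ha : a.1 = v) (b : V) (hb : b = u ∨ b = v)
    (xs : ∀ s : {i : Ei // Joins ends u v i}, X (.inl s.1))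
    (xi' : ∀ i : EiGrp ends u v, Xgrp X ends u v (.inl i))
    (xe : ∀ j : Ee, X (.inr j)) :
    assembleGrp X ends extEnd u v huv a ha b hb xs
        (fun e' : {e' : EiGrp ends u v ⊕ Ee //
            Inc (endsGrp ends u v huv) (extEndGrp extEnd u v huv) a e'} =>
          combine xi' xe e'.1)
      = fun e : {e : Ei ⊕ Ee // Inc ends extEnd b e} =>
          combine (xiFull X ends u v xs xi') xe e.1 := by
  funext e
  obtain ⟨e, h⟩ := e
  cases e with
  | inl i =>
    show (if hJ : Joins ends u v i then xs ⟨i, hJ⟩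
        else combine xi' xe (.inl ⟨i, hJ⟩)) = xiFull X ends u v xs xi' i
    by_cases hJ : Joins ends u v i <;> simp [hJ, xiFull, combine] <;> rfl
  | inr j => rfl

lemma restrictGrp_combine (a : Vgrp u) (ha : a.1 ≠ v)
    (xs : ∀ s : {i : Ei // Joins ends u v i}, X (.inl s.1))
    (xi' : ∀ i : EiGrp ends u v, Xgrp X ends u v (.inl i))
    (xe : ∀ j : Ee, X (.inr j)) :
    restrictGrp X ends extEnd u v huv a ha
        (fun e' : {e' : EiGrp ends u v ⊕ Ee //
            Inc (endsGrp ends u v huv) (extEndGrp extEnd u v huv) a e'} =>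
          combine xi' xe e'.1)
      = fun e : {e : Ei ⊕ Ee // Inc ends extEnd a.1 e} =>
          combine (xiFull X ends u v xs xi') xe e.1 := by
  funext e
  obtain ⟨e, h⟩ := e
  cases e with
  | inl i =>
    have hJ : ¬ Joins ends u v i := by
      have h' : (ends i).1 = a.1 ∨ (ends i).2 = a.1 := h
      rintro (hJ | hJ) <;> rw [hJ] at h' <;> rcases h' with h' | h'
      · exact a.2 h'.symm
      · exact ha h'.symm
      · exact ha h'.symm
      · exact a.2 h'.symm
    show combine xi' xe (.inl ⟨i, hJ⟩) = xiFull X ends u v xs xi' i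
    simp [hJ, xiFull, combine]
  | inr j => rfl

end Aux

/-- **Vertex Grouping preserves the exterior function.**
Let `G` be an NFG, `u ≠ v` two vertices, and `S` the set of internal edges joining `u` and
`v`.  Merging `u` and `v` into a single vertex whose incident edges are those incident to
`u` or `v` other than `S` and whose local function is the sum-of-products `⟨f u, f v⟩`
yields an NFG `G'` (in particular, every internal edge of `G'` again has two distinct
endpoints), and `Z_{G'} = Z_G`. -/
theorem vertex_grouping_preserves_exterior_function {V Ei Ee : Type}
    [Fintype V] [Fintype Ei] [Fintype Ee]
    (X : Ei ⊕ Ee → Type) [∀ e, Fintype (X e)]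
    (ends : Ei → V × V) (hne : ∀ i : Ei, (ends i).1 ≠ (ends i).2)
    (extEnd : Ee → V)
    (f : ∀ w : V, ((e : {e : Ei ⊕ Ee // Inc ends extEnd w e}) → X e.1) → ℂ)
    (u v : V) (huv : u ≠ v) :
    (∀ i : EiGrp ends u v,
        (endsGrp ends u v huv i).1 ≠ (endsGrp ends u v huv i).2)
      ∧ ∀ xe : ∀ j : Ee, X (.inr j),
          Zfun (Xgrp X ends u v) (endsGrp ends u v huv) (extEndGrp extEnd u v huv)
              (fGrp X ends extEnd u v huv f) xe
            = Zfun X ends extEnd f xe := by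
  constructor
  · rintro ⟨i, hJ⟩ h
    simp only [endsGrp] at h
    by_cases h1 : (ends i).1 = u
    · by_cases h2 : (ends i).2 = u
      · exact hne i (h1.trans h2.symm)
      · rw [mergeV, dif_pos h1, mergeV_of_ne u v huv h2] at h
        exact hJ (Or.inl (Prod.ext h1 (congrArg Subtype.val h).symm))
    · by_cases h2 : (ends i).2 = u
      · rw [mergeV_of_ne u v huv h1, mergeV, dif_pos h2] at h
        exact hJ (Or.inr (Prod.ext (congrArg Subtype.val h) h2))
      · rw [mergeV_of_ne u v huv h1, mergeV_of_ne u v huv h2] at h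
        exact hne i (congrArg Subtype.val h)
  · intro xe
    set w0 : Vgrp u := ⟨v, Ne.symm huv⟩ with hw0
    unfold Zfun
    rw [← Equiv.sum_comp (Equiv.piEquivPiSubtypeProd (Joins ends u v)
        (fun i => X (.inl i))).symm
        (fun xi => ∏ w : V, f w fun e => combine xi xe e.1),
      Fintype.sum_prod_type]
    have hsymm : ∀ (xs : ∀ s : {i : Ei // Joins ends u v i}, X (.inl s.1))
        (xi' : ∀ i : EiGrp ends u v, Xgrp X ends u v (.inl i)),
        (Equiv.piEquivPiSubtypeProd (Joins ends u v) (fun i => X (.inl i))).symm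
            (xs, xi') = xiFull X ends u v xs xi' := by
      intro xs xi'
      funext i
      simp [Equiv.piEquivPiSubtypeProd_symm_apply, xiFull]
    rw [Finset.sum_comm]
    refine Finset.sum_congr (by congr!; ext; simp; exact @Finset.mem_univ _ _ _) fun xi' _ => ?_
    -- left side: split off the merged vertex from the product
    have hprod : ∀ xi' : ∀ i : EiGrp ends u v, Xgrp X ends u v (.inl i),
        (∏ a : Vgrp u, fGrp X ends extEnd u v huv f a
            fun e => combine xi' xe e.1)
          = (∑ xs' : ∀ s : {i : Ei // Joins ends u v i}, X (.inl s.1),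
              f u (assembleGrp X ends extEnd u v huv w0 rfl u (Or.inl rfl) xs'
                  fun e => combine xi' xe e.1)
                * f v (assembleGrp X ends extEnd u v huv w0 rfl v (Or.inr rfl) xs'
                  fun e => combine xi' xe e.1))
            * ∏ a ∈ Finset.univ.erase w0,
                fGrp X ends extEnd u v huv f a fun e => combine xi' xe e.1 := by
      intro xi'
      rw [← Finset.mul_prod_erase Finset.univ _ (Finset.mem_univ w0)]
      congr 1
      rw [fGrp, dif_pos rfl]
    rw [hprod xi', Finset.sum_mul]
    refine Finset.sum_congr (by congr!) fun xs _ => ?_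
    rw [assembleGrp_combine X ends extEnd u v huv w0 rfl u (Or.inl rfl) xs xi' xe,
      assembleGrp_combine X ends extEnd u v huv w0 rfl v (Or.inr rfl) xs xi' xe,
      hsymm xs xi',
      ← Finset.mul_prod_erase Finset.univ _ (Finset.mem_univ u),
      ← Finset.mul_prod_erase _ _
        (Finset.mem_erase.mpr ⟨Ne.symm huv, Finset.mem_univ v⟩),
      ← mul_assoc]
    congr 1
    refine Finset.prod_bij' (fun a _ => a.1)
      (fun w hw => ⟨w, (Finset.mem_erase.mp (Finset.mem_erase.mp hw).2).1⟩)
      ?_ ?_ ?_ ?_ ?_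
    · intro a ha
      refine Finset.mem_erase.mpr ⟨?_, Finset.mem_erase.mpr ⟨a.2, Finset.mem_univ _⟩⟩
      intro hv
      exact (Finset.mem_erase.mp ha).1 (Subtype.ext hv)
    · intro w hw
      refine Finset.mem_erase.mpr ⟨?_, Finset.mem_univ _⟩
      intro hc
      exact (Finset.mem_erase.mp hw).1 (congrArg Subtype.val hc)
    · intro a _; rfl
    · intro w _; rfl
    · intro a ha
      have hav : a.1 ≠ v := fun hv => (Finset.mem_erase.mp ha).1 (Subtype.ext hv)
      rw [fGrp, dif_neg hav,
        restrictGrp_combine X ends extEnd u v huv a hav xs xi' xe]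
end

section
/- Generalized Holant Theorem: Let G = (V, E_int, E_ext, f_V) be an NFG with alphabets X_e. For each edge e, let Y_e be a finite alphabet, and for each vertex v and each edge e ∈ E(v), let Φ_{v,e} : X_e × Y_e → ℂ be a function such that for every internal edge e with endpoints u and v, the pair Φ_{u,e}, Φ_{v,e} is dual with respect to the coupling alphabet Y_e. For each vertex v define F_v : ∏_{e∈E(v)} Y_e → ℂ by F_v(y_{E(v)}) := ∑_{x_{E(v)} ∈ ∏_{e∈E(v)} X_e} f_v(x_{E(v)}) · ∏_{e∈E(v)} Φ_{v,e}(x_e, y_e), and let G^H := (V, E_int, E_ext, F_V) be the NFG with the same topology, edge alphabets Y_e, and local functions F_v. Then Z_{G^H}(y_{E_ext}) = ∑_{x_{E_ext} ∈ ∏_{e∈E_ext} X_e} Z_G(x_{E_ext}) · ∏_{e∈E_ext} Φ_e(x_e, y_e), where for an external edge e, Φ_e denotes Φ_{v,e} for the unique vertex v incident to e. -/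
open scoped BigOperators Classical

noncomputable def sigmaEdgeEquiv {V Ei Ee : Type} (ends : Ei → V × V) (extEnd : Ee → V)
    (hne : ∀ i : Ei, (ends i).1 ≠ (ends i).2) :
    (Ei ⊕ Ei ⊕ Ee) ≃ Σ v : V, {e : Ei ⊕ Ee // Inc ends extEnd v e} where
  toFun s := match s with
    | .inl i => ⟨(ends i).1, ⟨.inl i, Or.inl rfl⟩⟩
    | .inr (.inl i) => ⟨(ends i).2, ⟨.inl i, Or.inr rfl⟩⟩
    | .inr (.inr j) => ⟨extEnd j, ⟨.inr j, rfl⟩⟩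
  invFun p := match p with
    | ⟨v, ⟨.inl i, _⟩⟩ => if (ends i).1 = v then .inl i else .inr (.inl i)
    | ⟨_, ⟨.inr j, _⟩⟩ => .inr (.inr j)
  left_inv s := by
    rcases s with i | i | j
    · simp
    · simp [hne i]
    · rfl
  right_inv p := by
    obtain ⟨v, ⟨e, h⟩⟩ := p
    cases e with
    | inl i =>
      rcases h with h | h
      · subst h; simp
      · subst h
        have h1 : ¬ ((ends i).1 = (ends i).2) := hne i
        simp [h1]
    | inr j => subst h; rfl

def Cons {V Ei Ee : Type} {X : Ei ⊕ Ee → Type} (ends : Ei → V × V) (extEnd : Ee → V)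
    (g : ∀ v : V, (e : {e : Ei ⊕ Ee // Inc ends extEnd v e}) → X e.1) : Prop :=
  ∀ i : Ei, g (ends i).1 ⟨.inl i, Or.inl rfl⟩ = g (ends i).2 ⟨.inl i, Or.inr rfl⟩

def glueEquiv {V Ei Ee : Type} {X : Ei ⊕ Ee → Type} (ends : Ei → V × V) (extEnd : Ee → V) :
    ((∀ i : Ei, X (.inl i)) × (∀ j : Ee, X (.inr j))) ≃
      {g : ∀ v : V, (e : {e : Ei ⊕ Ee // Inc ends extEnd v e}) → X e.1 // Cons ends extEnd g} where
  toFun p := ⟨fun _ e => combine p.1 p.2 e.1, fun _ => rfl⟩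
  invFun g := (fun i => g.1 (ends i).1 ⟨.inl i, Or.inl rfl⟩,
               fun j => g.1 (extEnd j) ⟨.inr j, rfl⟩)
  left_inv p := rfl
  right_inv g := by
    obtain ⟨g, hg⟩ := g
    apply Subtype.ext
    funext v e
    obtain ⟨e, h⟩ := e
    cases e with
    | inl i =>
      rcases h with h | h
      · subst h; rfl
      · subst h; exact hg i
    | inr j => subst h; rfl

/-- **Generalized Holant Theorem.**
Let `G = (V, Ei, Ee, f)` be an NFG with edge alphabets `X e`.  For each vertex `v` and edge
`e` let `Φ v e : X e × Y e → ℂ` be such that for every internal edge `i` the pair of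
transformers at its two endpoints is dual with respect to the coupling alphabet `Y (.inl i)`.
Let `F v` be the local transform of `f v` by its surrounding transformers, and let
`G^H = (V, Ei, Ee, F)` be the holographically transformed NFG (same topology, alphabets
`Y e`).  Then `Z_{G^H}(y) = ∑ x_ext, Z_G(x_ext) * ∏_{e external} Φ_e (x_e, y_e)`. -/
theorem generalized_holant_theorem {V Ei Ee : Type}
    [Fintype V] [Fintype Ei] [Fintype Ee]
    (X Y : Ei ⊕ Ee → Type) [∀ e, Fintype (X e)] [∀ e, Fintype (Y e)]
    (ends : Ei → V × V) (hne : ∀ i : Ei, (ends i).1 ≠ (ends i).2)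
    (extEnd : Ee → V)
    (f : ∀ v : V, ((e : {e : Ei ⊕ Ee // Inc ends extEnd v e}) → X e.1) → ℂ)
    (Φ : ∀ v : V, ∀ e : Ei ⊕ Ee, X e → Y e → ℂ)
    (hdual : ∀ i : Ei, ∀ x x' : X (.inl i),
      ∑ y : Y (.inl i), Φ (ends i).1 (.inl i) x y * Φ (ends i).2 (.inl i) x' y
        = if x = x' then 1 else 0)
    (F : ∀ v : V, ((e : {e : Ei ⊕ Ee // Inc ends extEnd v e}) → Y e.1) → ℂ)
    (hF : ∀ v yv, F v yv =
      ∑ xv : (e : {e : Ei ⊕ Ee // Inc ends extEnd v e}) → X e.1,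
        f v xv * ∏ e : {e : Ei ⊕ Ee // Inc ends extEnd v e}, Φ v e.1 (xv e) (yv e))
    (ye : ∀ j : Ee, Y (.inr j)) :
    Zfun Y ends extEnd F ye
      = ∑ xe : ∀ j : Ee, X (.inr j),
          Zfun X ends extEnd f xe * ∏ j : Ee, Φ (extEnd j) (.inr j) (xe j) (ye j) := by
  classical
  -- abbreviation for per-vertex configuration space
  have key : Zfun Y ends extEnd F ye
      = ∑ g : ∀ v : V, (e : {e : Ei ⊕ Ee // Inc ends extEnd v e}) → X e.1,
          (if Cons ends extEnd g then 1 else 0) *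
          ((∏ v, f v (g v)) *
            ∏ j : Ee, Φ (extEnd j) (.inr j) (g (extEnd j) ⟨.inr j, rfl⟩) (ye j)) := by
    unfold Zfun
    calc
      ∑ yi : ∀ i : Ei, Y (.inl i), ∏ v, F v (fun e => combine yi ye e.1)
          = ∑ yi : ∀ i : Ei, Y (.inl i),
              ∑ g : ∀ v : V, (e : {e : Ei ⊕ Ee // Inc ends extEnd v e}) → X e.1,
              ∏ v, (f v (g v) *
                ∏ e : {e : Ei ⊕ Ee // Inc ends extEnd v e},
                  Φ v e.1 (g v e) (combine yi ye e.1)) := by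
            refine Finset.sum_congr rfl fun yi _ => ?_
            exact (Finset.prod_congr rfl fun v _ => hF v _).trans
              (Fintype.prod_sum fun v xv => f v xv *
                ∏ e : {e : Ei ⊕ Ee // Inc ends extEnd v e},
                  Φ v e.1 (xv e) (combine yi ye e.1))
      _ = ∑ g : ∀ v : V, (e : {e : Ei ⊕ Ee // Inc ends extEnd v e}) → X e.1,
            (∏ v, f v (g v)) *
            ∑ yi : ∀ i : Ei, Y (.inl i),
              ∏ v, ∏ e : {e : Ei ⊕ Ee // Inc ends extEnd v e},
                Φ v e.1 (g v e) (combine yi ye e.1) := by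
            rw [Finset.sum_comm]
            refine Finset.sum_congr rfl fun g _ => ?_
            rw [Finset.mul_sum]
            exact Finset.sum_congr rfl fun yi _ => Finset.prod_mul_distrib
      _ = ∑ g : ∀ v : V, (e : {e : Ei ⊕ Ee // Inc ends extEnd v e}) → X e.1,
            (∏ v, f v (g v)) *
            ∑ yi : ∀ i : Ei, Y (.inl i),
              ((∏ i : Ei, Φ (ends i).1 (.inl i) (g (ends i).1 ⟨.inl i, Or.inl rfl⟩) (yi i)
                  * Φ (ends i).2 (.inl i) (g (ends i).2 ⟨.inl i, Or.inr rfl⟩) (yi i)) *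
               ∏ j : Ee, Φ (extEnd j) (.inr j) (g (extEnd j) ⟨.inr j, rfl⟩) (ye j)) := by
            refine Finset.sum_congr rfl fun g _ => ?_
            congr 1
            refine Finset.sum_congr rfl fun yi _ => ?_
            calc
              ∏ v, ∏ e : {e : Ei ⊕ Ee // Inc ends extEnd v e},
                  Φ v e.1 (g v e) (combine yi ye e.1)
                  = ∏ p : Σ v : V, {e : Ei ⊕ Ee // Inc ends extEnd v e},
                      Φ p.1 p.2.1 (g p.1 p.2) (combine yi ye p.2.1) := by
                    rw [← Finset.univ_sigma_univ, Finset.prod_sigma]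
              _ = ∏ s : Ei ⊕ Ei ⊕ Ee,
                    (fun p : Σ v : V, {e : Ei ⊕ Ee // Inc ends extEnd v e} =>
                      Φ p.1 p.2.1 (g p.1 p.2) (combine yi ye p.2.1))
                      (sigmaEdgeEquiv ends extEnd hne s) :=
                    (Equiv.prod_comp (sigmaEdgeEquiv ends extEnd hne) _).symm
              _ = _ := by
                    rw [Fintype.prod_sum_type, Fintype.prod_sum_type, ← mul_assoc,
                      ← Finset.prod_mul_distrib]
                    rfl
      _ = ∑ g : ∀ v : V, (e : {e : Ei ⊕ Ee // Inc ends extEnd v e}) → X e.1,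
            (∏ v, f v (g v)) *
            ((if Cons ends extEnd g then 1 else 0) *
             ∏ j : Ee, Φ (extEnd j) (.inr j) (g (extEnd j) ⟨.inr j, rfl⟩) (ye j)) := by
            refine Finset.sum_congr rfl fun g _ => ?_
            congr 1
            rw [← Finset.sum_mul]
            congr 1
            rw [← Fintype.prod_sum fun (i : Ei) (y : Y (.inl i)) =>
              Φ (ends i).1 (.inl i) (g (ends i).1 ⟨.inl i, Or.inl rfl⟩) y
                * Φ (ends i).2 (.inl i) (g (ends i).2 ⟨.inl i, Or.inr rfl⟩) y]
            refine (Finset.prod_congr rfl fun i _ => hdual i _ _).trans ?_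
            rw [Finset.prod_boole]
            simp [Cons]
            congr
      _ = _ := by
            refine Finset.sum_congr rfl fun g _ => ?_
            ring
  rw [key]
  simp only [ite_mul, one_mul, zero_mul]
  rw [← Finset.sum_filter, Finset.sum_subtype (p := Cons ends extEnd) (Finset.univ.filter (Cons ends extEnd))
    (by simp), ← Equiv.sum_comp (glueEquiv (X := X) ends extEnd), Fintype.sum_prod_type,
    Finset.sum_comm]
  unfold Zfun
  refine Finset.sum_congr rfl fun xe _ => ?_
  rw [Finset.sum_mul]
  rfl
end

section
/- Holant Theorem (Valiant's special case): Let G = (V, E_int, ∅, f_V) be an NFG with no external edges, so that Z_G is a scalar. For each internal edge e with endpoints u and v, let Y_e be a finite alphabet and let Φ_{u,e}, Φ_{v,e} : X_e × Y_e → ℂ be dual with respect to the coupling alphabet Y_e. For each vertex v define F_v(y_{E(v)}) := ∑_{x_{E(v)}} f_v(x_{E(v)}) · ∏_{e∈E(v)} Φ_{v,e}(x_e, y_e), and let G^H := (V, E_int, ∅, F_V). Then the scalars Z_{G^H} and Z_G are equal: ∑_{y_{E_int}} ∏_{v∈V} F_v(y_{E(v)}) = ∑_{x_{E_int}} ∏_{v∈V}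 f_v(x_{E(v)}). -/
open scoped BigOperators Classical

section HolantAux

variable {V Ei : Type} (ends : Ei → V × V) (extEnd : Empty → V)

/-- The two "endpoint slots" `Ei × Bool` are in bijection with incident pairs. -/
noncomputable def edgeEquiv (hne : ∀ i : Ei, (ends i).1 ≠ (ends i).2) :
    (Ei × Bool) ≃ (Σ v : V, {e : Ei ⊕ Empty // Inc ends extEnd v e}) where
  toFun p :=
    match p with
    | (i, false) => ⟨(ends i).1, ⟨.inl i, Or.inl rfl⟩⟩
    | (i, true)  => ⟨(ends i).2, ⟨.inl i, Or.inr rfl⟩⟩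
  invFun s :=
    match s with
    | ⟨v, ⟨.inl i, _⟩⟩ => (i, decide ((ends i).2 = v))
    | ⟨_, ⟨.inr j, _⟩⟩ => j.elim
  left_inv := by
    rintro ⟨i, b⟩
    cases b
    · simp [(hne i).symm]
    · simp
  right_inv := by
    rintro ⟨v, ⟨e, h⟩⟩
    cases e with
    | inl i =>
      rcases h with h | h
      · subst h
        simp [(hne i).symm]
      · subst h
        simp
    | inr j => exact j.elim

end HolantAux

/-- **Holant Theorem** (Valiant's special case of the generalized Holant theorem).
Let `G = (V, Ei, ∅, f)` be an NFG with no external edges, so its exterior function is a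
scalar.  For each internal edge `i` with endpoints `u, v`, let `Φ u (.inl i)` and
`Φ v (.inl i)` be dual with respect to the coupling alphabet `Y (.inl i)`, and let `F v` be
the local transform of `f v` by its surrounding transformers.  Then the scalars realized by
`G^H = (V, Ei, ∅, F)` and by `G` coincide. -/


theorem holant_theorem {V Ei : Type}
    [Fintype V] [Fintype Ei]
    (X Y : Ei ⊕ Empty → Type) [∀ e, Fintype (X e)] [∀ e, Fintype (Y e)]
    (ends : Ei → V × V) (hne : ∀ i : Ei, (ends i).1 ≠ (ends i).2)
    (extEnd : Empty → V)
    (f : ∀ v : V, ((e : {e : Ei ⊕ Empty // Inc ends extEnd v e}) → X e.1) → ℂ)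
    (Φ : ∀ v : V, ∀ e : Ei ⊕ Empty, X e → Y e → ℂ)
    (hdual : ∀ i : Ei, ∀ x x' : X (.inl i),
      ∑ y : Y (.inl i), Φ (ends i).1 (.inl i) x y * Φ (ends i).2 (.inl i) x' y
        = if x = x' then 1 else 0)
    (F : ∀ v : V, ((e : {e : Ei ⊕ Empty // Inc ends extEnd v e}) → Y e.1) → ℂ)
    (hF : ∀ v yv, F v yv =
      ∑ xv : (e : {e : Ei ⊕ Empty // Inc ends extEnd v e}) → X e.1,
        f v xv * ∏ e : {e : Ei ⊕ Empty // Inc ends extEnd v e}, Φ v e.1 (xv e) (yv e)) :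
    Zfun Y ends extEnd F (fun j => j.elim)
      = Zfun X ends extEnd f (fun j => j.elim) := by
  classical
  set ye : ∀ j : Empty, Y (.inr j) := fun j => j.elim with hye
  set xef : ∀ j : Empty, X (.inr j) := fun j => j.elim with hxef
  unfold Zfun
  -- Expand F and turn the product of sums into a sum of products
  have step1 : ∀ yi : ∀ i : Ei, Y (.inl i),
      (∏ v : V, F v fun e => combine yi ye e.1)
        = ∑ g : ∀ v : V, (e : {e : Ei ⊕ Empty // Inc ends extEnd v e}) → X e.1,
            ∏ v : V, (f v (g v) *
              ∏ e : {e : Ei ⊕ Empty // Inc ends extEnd v e},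
                Φ v e.1 (g v e) (combine yi ye e.1)) := by
    intro yi
    simp_rw [hF]
    rw [Finset.prod_univ_sum, Fintype.piFinset_univ]
  simp_rw [step1]
  rw [Finset.sum_comm]
  -- for fixed g, sum over y factorizes over edges and gives delta functions
  have key : ∀ g : ∀ v : V, (e : {e : Ei ⊕ Empty // Inc ends extEnd v e}) → X e.1,
      (∑ yi : ∀ i : Ei, Y (.inl i), ∏ v : V,
          ∏ e : {e : Ei ⊕ Empty // Inc ends extEnd v e},
            Φ v e.1 (g v e) (combine yi ye e.1))
        = ∏ i : Ei, (if g (ends i).1 ⟨.inl i, Or.inl rfl⟩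
              = g (ends i).2 ⟨.inl i, Or.inr rfl⟩ then (1 : ℂ) else 0) := by
    intro g
    have h1 : ∀ yi : ∀ i : Ei, Y (.inl i),
        (∏ v : V, ∏ e : {e : Ei ⊕ Empty // Inc ends extEnd v e},
            Φ v e.1 (g v e) (combine yi ye e.1))
          = ∏ i : Ei,
              (Φ (ends i).1 (.inl i) (g (ends i).1 ⟨.inl i, Or.inl rfl⟩) (yi i) *
               Φ (ends i).2 (.inl i) (g (ends i).2 ⟨.inl i, Or.inr rfl⟩) (yi i)) := by
      intro yi
      have hs := Finset.prod_sigma (Finset.univ (α := V))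
        (fun v => Finset.univ (α := {e : Ei ⊕ Empty // Inc ends extEnd v e}))
        (fun p => Φ p.1 p.2.1 (g p.1 p.2) (combine yi ye p.2.1))
      rw [Finset.univ_sigma_univ] at hs
      rw [← hs, ← Equiv.prod_comp (edgeEquiv ends extEnd hne)]
      rw [Fintype.prod_prod_type]
      refine Finset.prod_congr rfl fun i _ => ?_
      rw [Fintype.prod_bool]
      simp [edgeEquiv, combine, mul_comm]
    simp_rw [h1]
    have hps := Finset.prod_univ_sum (fun i : Ei => (Finset.univ : Finset (Y (.inl i))))
      (fun i y => Φ (ends i).1 (.inl i) (g (ends i).1 ⟨.inl i, Or.inl rfl⟩) y *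
        Φ (ends i).2 (.inl i) (g (ends i).2 ⟨.inl i, Or.inr rfl⟩) y)
    rw [Fintype.piFinset_univ] at hps
    rw [← hps]
    simp_rw [hdual]
  have expand : ∀ g : ∀ v : V, (e : {e : Ei ⊕ Empty // Inc ends extEnd v e}) → X e.1,
      (∑ yi : ∀ i : Ei, Y (.inl i), ∏ v : V,
          (f v (g v) * ∏ e : {e : Ei ⊕ Empty // Inc ends extEnd v e},
              Φ v e.1 (g v e) (combine yi ye e.1)))
        = (if (∀ i : Ei, g (ends i).1 ⟨.inl i, Or.inl rfl⟩
              = g (ends i).2 ⟨.inl i, Or.inr rfl⟩) then (∏ v : V, f v (g v)) else 0) := by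
    intro g
    simp_rw [Finset.prod_mul_distrib, ← Finset.mul_sum]
    rw [key g, Fintype.prod_boole, mul_ite, mul_one, mul_zero]
  simp_rw [expand]
  rw [← Finset.sum_filter]
  refine Finset.sum_nbij' (fun g i => g (ends i).1 ⟨.inl i, Or.inl rfl⟩)
    (fun xi v e => combine xi xef e.1) ?_ ?_ ?_ ?_ ?_
  · intro g _; exact Finset.mem_univ _
  · intro xi _
    simp [Finset.mem_filter]
  · intro g hg
    simp only [Finset.mem_filter, Finset.mem_univ, true_and] at hg
    funext v e
    obtain ⟨e', he⟩ := e
    cases e' with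
    | inl i =>
      rcases he with h | h
      · subst h; rfl
      · subst h; exact hg i
    | inr j => exact j.elim
  · intro xi _; rfl
  · intro g hg
    simp only [Finset.mem_filter, Finset.mem_univ, true_and] at hg
    refine Finset.prod_congr rfl fun v _ => ?_
    congr 1
    funext e
    obtain ⟨e', he⟩ := e
    cases e' with
    | inl i =>
      rcases he with h | h
      · subst h; rfl
      · subst h; exact (hg i).symm
    | inr j => exact j.elim
end

section
/- PerfMatch decomposes over matchgates: Let (H_1, W_1), …, (H_m, W_m) be matchgates with pairwise disjoint vertex sets, and let H be the weighted graph whose vertex set is the union of the vertex sets of the H_i and whose edge set is the union of the edge sets of the H_i (with their weights) together with a set ℰ of connecting edges, each of weight 1, where each edge in ℰ joins an external vertex of one matchgate to an external vertex of a different matchgate and every external vertex of every matchgate is the endpoint of exactly one edge of ℰ. For each i, let ℰ(i) ⊆ ℰ be the connecting edges with an endpoint in H_i, and for a configuration x ∈ {0,1}^ℰ define the signature value μ_i(x_{ℰ(i)}) := π(H_i'), where H_i' is the weighted subgraph of H_i induced by deleting exactly those external vertices of H_i that are endpoints of some e ∈ ℰ(i) with x_e = 1. Then π(H) = ∑_{x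 ∈ {0,1}^ℰ} ∏_{i=1}^m μ_i(x_{ℰ(i)}). -/
open scoped BigOperators Classical

/-! # PerfMatch and matchgates

We work with a finite vertex type `Ω`, partitioned into `m` matchgates by `part : Ω → Fin m`.
Matchgate `i` is a weighted graph `G i` (all of whose edges join vertices of class `i`),
with weight function `w`, and with external vertices `W ∩ part⁻¹ i` (where `W : Finset Ω`).
The connecting edges are indexed by a finite type `Conn` with endpoint map `epts`; each
connecting edge joins external vertices of two different matchgates and every external
vertex lies on exactly one connecting edge.  Connecting edges get weight `1`. -/

/-- `M` is a perfect matching of the subgraph of `G` induced on the vertex set `A`: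
its edges are edges of `G` lying inside `A`, and every vertex of `A` lies on exactly one
edge of `M`. -/
def IsPerfectMatchingOn {Ω : Type} (G : SimpleGraph Ω) (A : Finset Ω)
    (M : Finset (Sym2 Ω)) : Prop :=
  (∀ e ∈ M, e ∈ G.edgeSet ∧ ∀ ω ∈ e, ω ∈ A) ∧ ∀ ω ∈ A, ∃! e : Sym2 Ω, e ∈ M ∧ ω ∈ e

/-- The PerfMatch of the weighted subgraph of `(G, w)` induced on the vertex set `A`:
the sum, over all perfect matchings `M` of that subgraph, of `∏ e ∈ M, w e`. -/
noncomputable def perfMatchOn {Ω : Type} [Fintype Ω] [DecidableEq Ω]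
    (G : SimpleGraph Ω) (w : Sym2 Ω → ℂ) (A : Finset Ω) : ℂ :=
  ∑ M ∈ Finset.univ.filter (IsPerfectMatchingOn G A), ∏ e ∈ M, w e

/-- **PerfMatch decomposes over matchgates.**
With the setup described above, let `H` be the weighted graph on `Ω` whose edges are the
matchgate edges (with weights `w`) together with the connecting edges (with weight `1`),
and for a configuration `x : Conn → Bool` let `μ i x` be the signature value of matchgate
`i`, i.e. the PerfMatch of the subgraph of `G i` induced by deleting those external
vertices of matchgate `i` lying on a connecting edge `c` with `x c = true`.  Then
`π(H) = ∑ x, ∏ i, μ i x`. -/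
theorem perfMatch_decomposition {Ω : Type} [Fintype Ω] [DecidableEq Ω]
    {m : ℕ} (part : Ω → Fin m)
    (G : Fin m → SimpleGraph Ω)
    (hG : ∀ (i : Fin m) (a b : Ω), (G i).Adj a b → part a = i ∧ part b = i)
    (w : Sym2 Ω → ℂ)
    (W : Finset Ω)
    (Conn : Type) [Fintype Conn] (epts : Conn → Ω × Ω)
    (hepts : ∀ c : Conn, (epts c).1 ∈ W ∧ (epts c).2 ∈ W
      ∧ part (epts c).1 ≠ part (epts c).2)
    (hcover : ∀ ω ∈ W, ∃! c : Conn, ω = (epts c).1 ∨ ω = (epts c).2) :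
    perfMatchOn
        (SimpleGraph.fromRel (fun a b =>
          (∃ i : Fin m, (G i).Adj a b) ∨ ∃ c : Conn, epts c = (a, b) ∨ epts c = (b, a)))
        (fun e => if ∃ c : Conn, e = Sym2.mk (epts c).1 (epts c).2 then 1 else w e)
        Finset.univ
      = ∑ x : Conn → Bool, ∏ i : Fin m,
          perfMatchOn (G i) w
            (Finset.univ.filter (fun ω => part ω = i
              ∧ ¬ ∃ c : Conn, x c = true ∧ (ω = (epts c).1 ∨ ω = (epts c).2))) := by
  classical
  set H : SimpleGraph Ω := SimpleGraph.fromRel (fun a b =>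
    (∃ i : Fin m, (G i).Adj a b) ∨ ∃ c : Conn, epts c = (a, b) ∨ epts c = (b, a)) with hH
  set w' : Sym2 Ω → ℂ := fun e => if ∃ c : Conn, e = Sym2.mk (epts c).1 (epts c).2 then 1 else w e with hw'
  set A : (Conn → Bool) → Fin m → Finset Ω := fun x i =>
    Finset.univ.filter (fun ω => part ω = i
      ∧ ¬ ∃ c : Conn, x c = true ∧ (ω = (epts c).1 ∨ ω = (epts c).2)) with hAdef
  show perfMatchOn H w' Finset.univ
      = ∑ x : Conn → Bool, ∏ i : Fin m, perfMatchOn (G i) w (A x i)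
  -- basic membership lemma for connecting edges
  have hmemconn : ∀ (c : Conn) (ω : Ω),
      ω ∈ Sym2.mk (epts c).1 (epts c).2 ↔ ω = (epts c).1 ∨ ω = (epts c).2 := by
    intro c ω
    have h : Sym2.mk (epts c).1 (epts c).2 = s((epts c).1, (epts c).2) := by simp
    rw [h, Sym2.mem_iff]
  have hne : ∀ c : Conn, (epts c).1 ≠ (epts c).2 := by
    intro c h
    exact (hepts c).2.2 (by rw [h])
  -- edges of H
  have hedge : ∀ e : Sym2 Ω, e ∈ H.edgeSet ↔
      (∃ i : Fin m, e ∈ (G i).edgeSet) ∨ ∃ c : Conn, e = Sym2.mk (epts c).1 (epts c).2 := by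
    intro e
    induction e using Sym2.ind with
    | _ a b =>
      rw [SimpleGraph.mem_edgeSet, hH, SimpleGraph.fromRel_adj]
      constructor
      · rintro ⟨hab, h | h⟩
        · rcases h with ⟨i, hi⟩ | ⟨c, hc⟩
          · exact Or.inl ⟨i, (G i).mem_edgeSet.2 hi⟩
          · refine Or.inr ⟨c, ?_⟩
            rcases hc with hc | hc
            · rw [hc]
            · rw [hc]; exact Sym2.eq_swap
        · rcases h with ⟨i, hi⟩ | ⟨c, hc⟩
          · exact Or.inl ⟨i, (G i).mem_edgeSet.2 hi.symm⟩
          · refine Or.inr ⟨c, ?_⟩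
            rcases hc with hc | hc
            · rw [hc]; exact Sym2.eq_swap
            · rw [hc]
      · rintro (⟨i, hi⟩ | ⟨c, hc⟩)
        · rw [SimpleGraph.mem_edgeSet] at hi
          exact ⟨hi.ne, Or.inl (Or.inl ⟨i, hi⟩)⟩
        · rcases (Sym2.mk_eq_mk_iff (p := (a, b)) (q := epts c)).1 hc with h | h
          · refine ⟨?_, Or.inl (Or.inr ⟨c, Or.inl h.symm⟩)⟩
            intro hab
            exact hne c (by rw [← h]; simp [hab])
          · have h' : (a, b) = ((epts c).2, (epts c).1) := h
            refine ⟨?_, Or.inl (Or.inr ⟨c, Or.inr ?_⟩)⟩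
            · intro hab
              apply hne c
              have h1 : a = (epts c).2 := (Prod.mk.injEq _ _ _ _ ▸ h').1
              have h2 : b = (epts c).1 := (Prod.mk.injEq _ _ _ _ ▸ h').2
              rw [← h1, ← h2, hab]
            · have h1 : a = (epts c).2 := (Prod.mk.injEq _ _ _ _ ▸ h').1
              have h2 : b = (epts c).1 := (Prod.mk.injEq _ _ _ _ ▸ h').2
              rw [h1, h2]
  -- vertices of matchgate edges have the right part
  have hGpart : ∀ (i : Fin m) (e : Sym2 Ω), e ∈ (G i).edgeSet → ∀ ω ∈ e, part ω = i := by
    intro i e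
    refine Sym2.ind (fun a b => ?_) e
    intro he ω hω
    rw [SimpleGraph.mem_edgeSet] at he
    rcases Sym2.mem_iff.1 hω with h | h
    · rw [h]; exact (hG i a b he).1
    · rw [h]; exact (hG i a b he).2
  -- matchgate edges are not connecting edges
  have hGnotconn : ∀ (i : Fin m) (e : Sym2 Ω), e ∈ (G i).edgeSet →
      ∀ c : Conn, e ≠ Sym2.mk (epts c).1 (epts c).2 := by
    intro i e he c h
    have h1 : part (epts c).1 = i :=
      hGpart i e he _ (by rw [h]; exact (hmemconn c _).2 (Or.inl rfl))
    have h2 : part (epts c).2 = i :=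
      hGpart i e he _ (by rw [h]; exact (hmemconn c _).2 (Or.inr rfl))
    exact (hepts c).2.2 (h1.trans h2.symm)
  -- every Sym2 has a member
  have hsomemem : ∀ e : Sym2 Ω, ∃ a : Ω, a ∈ e := by
    intro e
    induction e using Sym2.ind with
    | _ a b => exact ⟨a, Sym2.mem_mk_left a b⟩
  -- injectivity of c ↦ Sym2.mk (epts c).1 (epts c).2
  have hconninj : ∀ c c' : Conn, Sym2.mk (epts c).1 (epts c).2 = Sym2.mk (epts c').1 (epts c').2 → c = c' := by
    intro c c' h
    have h1 : (epts c).1 ∈ Sym2.mk (epts c').1 (epts c').2 := by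
      rw [← h]; exact (hmemconn c _).2 (Or.inl rfl)
    obtain ⟨d, -, hd⟩ := hcover ((epts c).1) (hepts c).1
    exact (hd c (Or.inl rfl)).trans (hd c' ((hmemconn c' _).1 h1)).symm
  -- membership in A
  have hA : ∀ (x : Conn → Bool) (i : Fin m) (ω : Ω), ω ∈ A x i ↔
      part ω = i ∧ ¬ ∃ c : Conn, x c = true ∧ (ω = (epts c).1 ∨ ω = (epts c).2) := by
    intro x i ω
    rw [hAdef]
    simp
  -- the gluing map
  set ψ : (Conn → Bool) → (Fin m → Finset (Sym2 Ω)) → Finset (Sym2 Ω) := fun x F =>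
    ((Finset.univ.filter (fun c => x c = true)).image (fun c => Sym2.mk (epts c).1 (epts c).2))
      ∪ Finset.univ.biUnion F with hψdef
  have hψmem : ∀ x F (e : Sym2 Ω), e ∈ ψ x F ↔
      (∃ c : Conn, x c = true ∧ e = Sym2.mk (epts c).1 (epts c).2) ∨ ∃ i : Fin m, e ∈ F i := by
    intro x F e
    rw [hψdef]
    constructor
    · intro he
      rcases Finset.mem_union.1 he with h | h
      · obtain ⟨c, hc, hce⟩ := Finset.mem_image.1 h
        exact Or.inl ⟨c, (Finset.mem_filter.1 hc).2, hce.symm⟩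
      · obtain ⟨i, -, hi⟩ := Finset.mem_biUnion.1 h
        exact Or.inr ⟨i, hi⟩
    · rintro (⟨c, hc, rfl⟩ | ⟨i, hi⟩)
      · exact Finset.mem_union_left _
          (Finset.mem_image.2 ⟨c, Finset.mem_filter.2 ⟨Finset.mem_univ c, hc⟩, rfl⟩)
      · exact Finset.mem_union_right _ (Finset.mem_biUnion.2 ⟨i, Finset.mem_univ i, hi⟩)
  -- the splitting maps
  set φx : Finset (Sym2 Ω) → Conn → Bool := fun M c => decide (Sym2.mk (epts c).1 (epts c).2 ∈ M) with hφx
  set φF : Finset (Sym2 Ω) → Fin m → Finset (Sym2 Ω) :=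
    fun M i => M.filter (fun e => e ∈ (G i).edgeSet) with hφF
  -- forward: a perfect matching of H splits into matchgate matchings
  have hfwd : ∀ M : Finset (Sym2 Ω), IsPerfectMatchingOn H Finset.univ M →
      ∀ i : Fin m, IsPerfectMatchingOn (G i) (A (φx M) i) (φF M i) := by
    intro M hM i
    constructor
    · intro e he
      rw [hφF, Finset.mem_filter] at he
      obtain ⟨heM, heG⟩ := he
      refine ⟨heG, ?_⟩
      intro ω hω
      rw [hA]
      refine ⟨hGpart i e heG ω hω, ?_⟩
      rintro ⟨c, hxc, hωc⟩
      rw [hφx] at hxc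
      have hcM : Sym2.mk (epts c).1 (epts c).2 ∈ M := of_decide_eq_true hxc
      obtain ⟨f, -, hf⟩ := hM.2 ω (Finset.mem_univ ω)
      have h1 := hf e ⟨heM, hω⟩
      have h2 := hf _ ⟨hcM, (hmemconn c ω).2 hωc⟩
      exact hGnotconn i e heG c (h1.trans h2.symm)
    · intro ω hω
      rw [hA] at hω
      obtain ⟨hpart, hnc⟩ := hω
      obtain ⟨e, ⟨heM, hωe⟩, huniq⟩ := hM.2 ω (Finset.mem_univ ω)
      have heH : e ∈ H.edgeSet := (hM.1 e heM).1
      rcases (hedge e).1 heH with ⟨j, hej⟩ | ⟨c, hec⟩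
      · have hji : j = i := by rw [← hpart]; exact (hGpart j e hej ω hωe).symm
        subst hji
        refine ⟨e, ⟨by rw [hφF]; exact Finset.mem_filter.2 ⟨heM, hej⟩, hωe⟩, ?_⟩
        rintro e' ⟨he', hωe'⟩
        rw [hφF, Finset.mem_filter] at he'
        exact huniq e' ⟨he'.1, hωe'⟩
      · exfalso
        apply hnc
        refine ⟨c, ?_, (hmemconn c ω).1 (hec ▸ hωe)⟩
        rw [hφx]
        exact decide_eq_true (hec ▸ heM)
  -- backward: matchgate matchings glue to a perfect matching of H
  have hbwd : ∀ (x : Conn → Bool) (F : Fin m → Finset (Sym2 Ω)),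
      (∀ i : Fin m, IsPerfectMatchingOn (G i) (A x i) (F i)) →
      IsPerfectMatchingOn H Finset.univ (ψ x F) := by
    intro x F hF
    constructor
    · intro e he
      refine ⟨?_, fun ω _ => Finset.mem_univ ω⟩
      rcases (hψmem x F e).1 he with ⟨c, -, rfl⟩ | ⟨i, hei⟩
      · exact (hedge _).2 (Or.inr ⟨c, rfl⟩)
      · exact (hedge _).2 (Or.inl ⟨i, ((hF i).1 e hei).1⟩)
    · rintro ω -
      by_cases h : ∃ c : Conn, x c = true ∧ (ω = (epts c).1 ∨ ω = (epts c).2)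
      · obtain ⟨c, hxc, hωc⟩ := h
        refine ⟨Sym2.mk (epts c).1 (epts c).2,
          ⟨(hψmem x F _).2 (Or.inl ⟨c, hxc, rfl⟩), (hmemconn c ω).2 hωc⟩, ?_⟩
        rintro e' ⟨he', hωe'⟩
        rcases (hψmem x F e').1 he' with ⟨c', hxc', rfl⟩ | ⟨j, hej⟩
        · have hωW : ω ∈ W := by
            rcases hωc with h' | h'
            · exact h' ▸ (hepts c).1
            · exact h' ▸ (hepts c).2.1
          obtain ⟨d, -, hd⟩ := hcover ω hωW
          have hcc : c' = c :=
            (hd c' ((hmemconn c' ω).1 hωe')).trans (hd c hωc).symm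
          rw [hcc]
        · exfalso
          have hωA : ω ∈ A x j := ((hF j).1 e' hej).2 ω hωe'
          exact ((hA x j ω).1 hωA).2 ⟨c, hxc, hωc⟩
      · have hωA : ω ∈ A x (part ω) := (hA x _ ω).2 ⟨rfl, h⟩
        obtain ⟨e, ⟨heF, hωe⟩, huniq⟩ := (hF (part ω)).2 ω hωA
        refine ⟨e, ⟨(hψmem x F e).2 (Or.inr ⟨part ω, heF⟩), hωe⟩, ?_⟩
        rintro e' ⟨he', hωe'⟩
        rcases (hψmem x F e').1 he' with ⟨c', hxc', rfl⟩ | ⟨j, hej⟩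
        · exact absurd ⟨c', hxc', (hmemconn c' ω).1 hωe'⟩ h
        · have hj : part ω = j := hGpart j e' ((hF j).1 e' hej).1 ω hωe'
          exact huniq e' ⟨by rw [hj]; exact hej, hωe'⟩
  -- now the main rewriting of the right-hand side
  have hRHS : ∑ x : Conn → Bool, ∏ i : Fin m, perfMatchOn (G i) w (A x i)
      = ∑ p ∈ (Finset.univ : Finset (Conn → Bool)).sigma
          (fun x => Fintype.piFinset
            (fun i => Finset.univ.filter (IsPerfectMatchingOn (G i) (A x i)))),
          ∏ i : Fin m, ∏ e ∈ p.2 i, w e := by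
    rw [Finset.sum_sigma]
    refine Finset.sum_congr rfl fun x _ => ?_
    simp only [perfMatchOn]
    exact Finset.prod_univ_sum _ _
  rw [hRHS, perfMatchOn]
  refine Finset.sum_nbij' (fun M => ⟨φx M, φF M⟩) (fun p => ψ p.1 p.2) ?_ ?_ ?_ ?_ ?_
  · -- maps into the sigma set
    intro M hM
    rw [Finset.mem_filter] at hM
    rw [Finset.mem_sigma]
    refine ⟨Finset.mem_univ _, ?_⟩
    rw [Fintype.mem_piFinset]
    intro i
    rw [Finset.mem_filter]
    exact ⟨Finset.mem_univ _, hfwd M hM.2 i⟩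
  · -- maps back
    rintro ⟨x, F⟩ hp
    rw [Finset.mem_sigma, Fintype.mem_piFinset] at hp
    rw [Finset.mem_filter]
    refine ⟨Finset.mem_univ _, hbwd x F fun i => (Finset.mem_filter.1 (hp.2 i)).2⟩
  · -- left inverse : ψ ∘ φ = id on perfect matchings of H
    intro M hM
    rw [Finset.mem_filter] at hM
    have hM' := hM.2
    ext e
    rw [hψmem]
    constructor
    · rintro (⟨c, hxc, rfl⟩ | ⟨i, hei⟩)
      · rw [hφx] at hxc
        exact of_decide_eq_true hxc
      · rw [hφF, Finset.mem_filter] at hei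
        exact hei.1
    · intro heM
      rcases (hedge e).1 (hM'.1 e heM).1 with ⟨i, hei⟩ | ⟨c, rfl⟩
      · refine Or.inr ⟨i, ?_⟩
        rw [hφF, Finset.mem_filter]
        exact ⟨heM, hei⟩
      · refine Or.inl ⟨c, ?_, rfl⟩
        rw [hφx]
        exact decide_eq_true heM
  · -- right inverse : φ ∘ ψ = id on compatible families
    rintro ⟨x, F⟩ hp
    rw [Finset.mem_sigma, Fintype.mem_piFinset] at hp
    have hF : ∀ i : Fin m, IsPerfectMatchingOn (G i) (A x i) (F i) :=
      fun i => (Finset.mem_filter.1 (hp.2 i)).2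
    have hx : φx (ψ x F) = x := by
      funext c
      have hiff : Sym2.mk (epts c).1 (epts c).2 ∈ ψ x F ↔ x c = true := by
        rw [hψmem]
        constructor
        · rintro (⟨c', hxc', hcc'⟩ | ⟨i, hci⟩)
          · rw [hconninj c c' hcc']
            exact hxc'
          · exact absurd rfl (hGnotconn i _ ((hF i).1 _ hci).1 c)
        · intro hxc
          exact Or.inl ⟨c, hxc, rfl⟩
      rw [hφx]
      cases hb : x c
      · rw [hb] at hiff
        simpa using fun h => by simpa using hiff.1 h
      · exact decide_eq_true (hiff.2 hb)
    have hFe : φF (ψ x F) = F := by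
      funext i
      ext e
      rw [hφF, Finset.mem_filter]
      constructor
      · rintro ⟨heψ, heG⟩
        rcases (hψmem x F e).1 heψ with ⟨c, hxc, rfl⟩ | ⟨j, hej⟩
        · exact absurd rfl (hGnotconn i _ heG c)
        · obtain ⟨a, ha⟩ := hsomemem e
          have hji : j = i := by
            rw [← hGpart j e ((hF j).1 e hej).1 a ha, hGpart i e heG a ha]
          rw [← hji]
          exact hej
      · intro heF
        exact ⟨(hψmem x F e).2 (Or.inr ⟨i, heF⟩), ((hF i).1 e heF).1⟩
    exact Sigma.ext hx (heq_of_eq hFe)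
  · -- weights agree
    intro M hM
    rw [Finset.mem_filter] at hM
    have hM' := hM.2
    have hsplit := Finset.prod_filter_mul_prod_filter_not M
      (fun e => ∃ c : Conn, e = Sym2.mk (epts c).1 (epts c).2) w'
    have h1 : ∏ e ∈ M.filter (fun e => ∃ c : Conn, e = Sym2.mk (epts c).1 (epts c).2), w' e = 1 := by
      refine Finset.prod_eq_one fun e he => ?_
      rw [hw']
      exact if_pos (Finset.mem_filter.1 he).2
    have h2 : M.filter (fun e => ¬ ∃ c : Conn, e = Sym2.mk (epts c).1 (epts c).2)
        = Finset.univ.biUnion (φF M) := by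
      ext e
      rw [Finset.mem_filter, Finset.mem_biUnion]
      constructor
      · rintro ⟨heM, hnc⟩
        rcases (hedge e).1 (hM'.1 e heM).1 with ⟨i, hei⟩ | ⟨c, hc⟩
        · refine ⟨i, Finset.mem_univ i, ?_⟩
          rw [hφF, Finset.mem_filter]
          exact ⟨heM, hei⟩
        · exact absurd ⟨c, hc⟩ hnc
      · rintro ⟨i, -, hei⟩
        rw [hφF, Finset.mem_filter] at hei
        exact ⟨hei.1, fun ⟨c, hc⟩ => hGnotconn i e hei.2 c hc⟩
    have hdisj : ∀ i ∈ (Finset.univ : Finset (Fin m)), ∀ j ∈ (Finset.univ : Finset (Fin m)),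
        i ≠ j → Disjoint (φF M i) (φF M j) := by
      intro i _ j _ hij
      rw [Finset.disjoint_left]
      intro e hei hej
      rw [hφF, Finset.mem_filter] at hei hej
      obtain ⟨a, ha⟩ := hsomemem e
      exact hij ((hGpart i e hei.2 a ha).symm.trans (hGpart j e hej.2 a ha))
    calc ∏ e ∈ M, w' e
        = (∏ e ∈ M.filter (fun e => ∃ c : Conn, e = Sym2.mk (epts c).1 (epts c).2), w' e) *
          ∏ e ∈ M.filter (fun e => ¬ ∃ c : Conn, e = Sym2.mk (epts c).1 (epts c).2), w' e := hsplit.symm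
      _ = ∏ e ∈ Finset.univ.biUnion (φF M), w' e := by rw [h1, h2, one_mul]
      _ = ∏ i : Fin m, ∏ e ∈ φF M i, w' e := Finset.prod_biUnion hdisj
      _ = ∏ i : Fin m, ∏ e ∈ φF M i, w e := by
          refine Finset.prod_congr rfl fun i _ => Finset.prod_congr rfl fun e he => ?_
          rw [hφF, Finset.mem_filter] at he
          rw [hw']
          exact if_neg fun ⟨c, hc⟩ => hGnotconn i e he.2 c hc
end
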